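/- (Theorem 2, finite-horizon best-iterate bound.) Suppose C > 0 and L is bounded below: B ≤ L x for all x ∈ E. Let θ, s : ℕ → E and η, ε : ℕ → ℝ satisfy, for all t: θ (t+1) = θ t − η t • s t; ‖s t − g (θ t)‖ ≤ ε t; 0 ≤ ε t ≤ ‖g (θ t)‖ / 4; and 0 ≤ η t ≤ 8 / (25 * C). Then for every T : ℕ with 0 < ∑_{t ∈ Finset.range T} η t, there exists t < T such that ‖g (θ t)‖^2 ≤ 2 * (L (θ 0) − B) / (∑_{t ∈ Finset.range T} η t). -/

import Mathlib

open RealInnerProductSpace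

lemma descent_lemma
    {E : Type*} [NormedAddCommGroup E] [InnerProductSpace ℝ E] [CompleteSpace E]
    (L : E → ℝ) (g : E → E) (hg : ∀ x : E, HasGradientAt L (g x) x)
    (C : NNReal) (hLip : LipschitzWith C g) (x y : E) :
    L y ≤ L x + ⟪g x, y - x⟫ + (C : ℝ) / 2 * ‖y - x‖ ^ 2 := by
  set ψ : ℝ → ℝ := fun t => L (x + t • (y - x)) - t * ⟪g x, y - x⟫
      - (C : ℝ) / 2 * t ^ 2 * ‖y - x‖ ^ 2 with hψ
  have hderiv : ∀ t : ℝ, HasDerivAt ψ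
      (⟪g (x + t • (y - x)), y - x⟫ - ⟪g x, y - x⟫ - (C : ℝ) * t * ‖y - x‖ ^ 2) t := by
    intro t
    have hline : HasDerivAt (fun t : ℝ => x + t • (y - x)) (y - x) t := by
      simpa using ((hasDerivAt_id t).smul_const (y - x)).const_add x
    have h1 : HasDerivAt (fun t : ℝ => L (x + t • (y - x)))
        (⟪g (x + t • (y - x)), y - x⟫) t := by
      have := (hg (x + t • (y - x))).hasFDerivAt.comp_hasDerivAt t hline
      simpa [InnerProductSpace.toDual_apply_apply, Function.comp_def] using this
    have h2 : HasDerivAt (fun t : ℝ => t * ⟪g x, y - x⟫) (⟪g x, y - x⟫) t := by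
      simpa using (hasDerivAt_id t).mul_const (⟪g x, y - x⟫)
    have h3 : HasDerivAt (fun t : ℝ => (C : ℝ) / 2 * t ^ 2 * ‖y - x‖ ^ 2)
        ((C : ℝ) * t * ‖y - x‖ ^ 2) t := by
      have : HasDerivAt (fun t : ℝ => t ^ 2) (2 * t) t := by
        simpa using hasDerivAt_pow 2 t
      have := ((this.const_mul ((C : ℝ) / 2)).mul_const (‖y - x‖ ^ 2))
      rw [show (C : ℝ) * t * ‖y - x‖ ^ 2 = (C : ℝ) / 2 * (2 * t) * ‖y - x‖ ^ 2 by ring]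
      exact this
    exact (h1.sub h2).sub h3
  have key : ψ 1 ≤ ψ 0 := by
    have hcont : ContinuousOn ψ (Set.Icc 0 1) :=
      fun t _ => (hderiv t).continuousAt.continuousWithinAt
    have hdiff : ∀ t ∈ interior (Set.Icc (0 : ℝ) 1), HasDerivAt ψ
        (⟪g (x + t • (y - x)), y - x⟫ - ⟪g x, y - x⟫ - (C : ℝ) * t * ‖y - x‖ ^ 2) t :=
      fun t _ => hderiv t
    have hle : ∀ t ∈ interior (Set.Icc (0 : ℝ) 1),
        ⟪g (x + t • (y - x)), y - x⟫ - ⟪g x, y - x⟫ - (C : ℝ) * t * ‖y - x‖ ^ 2 ≤ 0 := by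
      intro t ht
      rw [interior_Icc, Set.mem_Ioo] at ht
      have h1 : ⟪g (x + t • (y - x)), y - x⟫ - ⟪g x, y - x⟫
          = ⟪g (x + t • (y - x)) - g x, y - x⟫ := by
        rw [inner_sub_left]
      rw [h1, sub_nonpos]
      calc ⟪g (x + t • (y - x)) - g x, y - x⟫
          ≤ ‖g (x + t • (y - x)) - g x‖ * ‖y - x‖ := real_inner_le_norm _ _
        _ ≤ (C : ℝ) * ‖t • (y - x)‖ * ‖y - x‖ := by
            gcongr
            have := hLip.dist_le_mul (x + t • (y - x)) x
            simpa [dist_eq_norm] using this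
        _ = (C : ℝ) * (|t| * ‖y - x‖) * ‖y - x‖ := by rw [norm_smul]; simp
        _ = (C : ℝ) * t * ‖y - x‖ ^ 2 := by
            rw [abs_of_pos ht.1]; ring
    have anti : AntitoneOn ψ (Set.Icc 0 1) := by
      apply antitoneOn_of_deriv_nonpos (convex_Icc 0 1) hcont
      · intro t ht
        exact (hdiff t ht).differentiableAt.differentiableWithinAt
      · intro t ht
        rw [(hdiff t ht).deriv]
        exact hle t ht
    exact anti (Set.left_mem_Icc.2 zero_le_one) (Set.right_mem_Icc.2 zero_le_one) zero_le_one
  have e1 : ψ 1 = L y - ⟪g x, y - x⟫ - (C : ℝ) / 2 * ‖y - x‖ ^ 2 := by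
    have hx : x + (1 : ℝ) • (y - x) = y := by simp
    simp only [hψ, hx, one_pow, mul_one, one_mul]
  have e0 : ψ 0 = L x := by simp [hψ]
  rw [e1, e0] at key
  linarith

/-- Theorem 2, finite-horizon best-iterate bound. -/
theorem surrogate_best_iterate
    {E : Type*} [NormedAddCommGroup E] [InnerProductSpace ℝ E] [CompleteSpace E]
    (L : E → ℝ) (g : E → E) (hg : ∀ x : E, HasGradientAt L (g x) x)
    (C : NNReal) (hLip : LipschitzWith C g) (hC : 0 < (C : ℝ))
    (B : ℝ) (hB : ∀ x : E, B ≤ L x)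
    (θ s : ℕ → E) (η ε : ℕ → ℝ)
    (hθ : ∀ t : ℕ, θ (t + 1) = θ t - η t • s t)
    (hs : ∀ t : ℕ, ‖s t - g (θ t)‖ ≤ ε t)
    (hε0 : ∀ t : ℕ, 0 ≤ ε t) (hε : ∀ t : ℕ, ε t ≤ ‖g (θ t)‖ / 4)
    (hη0 : ∀ t : ℕ, 0 ≤ η t) (hη : ∀ t : ℕ, η t ≤ 8 / (25 * (C : ℝ))) :
    ∀ T : ℕ, 0 < ∑ t ∈ Finset.range T, η t →
      ∃ t < T, ‖g (θ t)‖ ^ 2 ≤ 2 * (L (θ 0) - B) / (∑ t ∈ Finset.range T, η t) := by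
  -- per-step decrease
  have step : ∀ t : ℕ, L (θ (t + 1)) ≤ L (θ t) - η t / 2 * ‖g (θ t)‖ ^ 2 := by
    intro t
    have hd := descent_lemma L g hg C hLip (θ t) (θ (t + 1))
    have hdiff : θ (t + 1) - θ t = -(η t • s t) := by rw [hθ t]; abel
    have hnorm : ‖θ (t + 1) - θ t‖ = η t * ‖s t‖ := by
      rw [hdiff, norm_neg, norm_smul, Real.norm_eq_abs, abs_of_nonneg (hη0 t)]
    have hinner : ⟪g (θ t), θ (t + 1) - θ t⟫ = -(η t * ⟪g (θ t), s t⟫) := by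
      rw [hdiff, inner_neg_right, real_inner_smul_right]
    -- inner product lower bound
    have hip : (3 / 4 : ℝ) * ‖g (θ t)‖ ^ 2 ≤ ⟪g (θ t), s t⟫ := by
      have h1 : ⟪g (θ t), s t⟫ = ‖g (θ t)‖ ^ 2 + ⟪g (θ t), s t - g (θ t)⟫ := by
        rw [inner_sub_right, real_inner_self_eq_norm_sq]; ring
      have h2 : |⟪g (θ t), s t - g (θ t)⟫| ≤ ‖g (θ t)‖ * (‖g (θ t)‖ / 4) := by
        calc |⟪g (θ t), s t - g (θ t)⟫| ≤ ‖g (θ t)‖ * ‖s t - g (θ t)‖ :=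
              abs_real_inner_le_norm _ _
          _ ≤ ‖g (θ t)‖ * (‖g (θ t)‖ / 4) := by
              gcongr; exact (hs t).trans (hε t)
      nlinarith [abs_le.mp h2, norm_nonneg (g (θ t))]
    -- norm upper bound
    have hsn : ‖s t‖ ≤ 5 / 4 * ‖g (θ t)‖ := by
      have hgs : g (θ t) + (s t - g (θ t)) = s t := by abel
      calc ‖s t‖ = ‖g (θ t) + (s t - g (θ t))‖ := by rw [hgs]
        _ ≤ ‖g (θ t)‖ + ‖s t - g (θ t)‖ := norm_add_le _ _
        _ ≤ ‖g (θ t)‖ + ‖g (θ t)‖ / 4 := by linarith [(hs t).trans (hε t)]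
        _ = 5 / 4 * ‖g (θ t)‖ := by ring
    have hsn2 : ‖s t‖ ^ 2 ≤ 25 / 16 * ‖g (θ t)‖ ^ 2 := by
      nlinarith [norm_nonneg (s t), norm_nonneg (g (θ t))]
    have hηC : (C : ℝ) * η t ≤ 8 / 25 := by
      have h := hη t
      rw [le_div_iff₀ (by positivity)] at h
      nlinarith
    -- combine
    rw [hinner, hnorm] at hd
    have hq : (C : ℝ) / 2 * (η t * ‖s t‖) ^ 2 ≤ η t / 4 * ‖g (θ t)‖ ^ 2 := by
      have h1 : (C : ℝ) / 2 * (η t * ‖s t‖) ^ 2 ≤ (C : ℝ) / 2 * η t ^ 2 * (25 / 16 * ‖g (θ t)‖ ^ 2) := by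
        calc (C : ℝ) / 2 * (η t * ‖s t‖) ^ 2 = (C : ℝ) / 2 * η t ^ 2 * ‖s t‖ ^ 2 := by ring
          _ ≤ (C : ℝ) / 2 * η t ^ 2 * (25 / 16 * ‖g (θ t)‖ ^ 2) := by
              have hcc : (0 : ℝ) ≤ (C : ℝ) / 2 * η t ^ 2 := by positivity
              exact mul_le_mul_of_nonneg_left hsn2 hcc
      have h2 : (C : ℝ) / 2 * η t ^ 2 * (25 / 16 * ‖g (θ t)‖ ^ 2) ≤ η t / 4 * ‖g (θ t)‖ ^ 2 := by
        nlinarith [mul_le_mul_of_nonneg_right hηC (mul_nonneg (hη0 t) (sq_nonneg ‖g (θ t)‖))]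
      linarith
    nlinarith [hη0 t]
  -- telescoping
  have tele : ∀ T : ℕ, ∑ t ∈ Finset.range T, η t / 2 * ‖g (θ t)‖ ^ 2 ≤ L (θ 0) - L (θ T) := by
    intro T
    induction T with
    | zero => simp
    | succ n ih =>
      rw [Finset.sum_range_succ]
      have := step n
      linarith
  intro T hT
  have hT0 : 0 < T := by
    by_contra h
    push_neg at h
    interval_cases T
    simp at hT
  -- min over range T
  obtain ⟨t₀, ht₀T, ht₀min⟩ := Finset.exists_min_image (Finset.range T)
    (fun t => ‖g (θ t)‖ ^ 2) ⟨0, Finset.mem_range.2 hT0⟩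
  rw [Finset.mem_range] at ht₀T
  refine ⟨t₀, ht₀T, ?_⟩
  have hsum : ‖g (θ t₀)‖ ^ 2 * (∑ t ∈ Finset.range T, η t) / 2
      ≤ ∑ t ∈ Finset.range T, η t / 2 * ‖g (θ t)‖ ^ 2 := by
    have hterm : ∀ i ∈ Finset.range T, ‖g (θ t₀)‖ ^ 2 * η i / 2 ≤ η i / 2 * ‖g (θ i)‖ ^ 2 := by
      intro i hi
      have h := ht₀min i hi
      have h0 := hη0 i
      nlinarith
    calc ‖g (θ t₀)‖ ^ 2 * (∑ t ∈ Finset.range T, η t) / 2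
        = ∑ i ∈ Finset.range T, ‖g (θ t₀)‖ ^ 2 * η i / 2 := by
          rw [Finset.mul_sum, Finset.sum_div]
      _ ≤ ∑ t ∈ Finset.range T, η t / 2 * ‖g (θ t)‖ ^ 2 := Finset.sum_le_sum hterm
  have hfin : ‖g (θ t₀)‖ ^ 2 * (∑ t ∈ Finset.range T, η t) / 2 ≤ L (θ 0) - B := by
    have := tele T
    have := hB (θ T)
    linarith
  rw [le_div_iff₀ hT]
  linarith
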